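/- arXiv:1303.0697 — 2 statements merged into one kernel-verified Lean document; each statement's English description precedes it below -/
import Mathlib

section
/- Let R be a ring, M a right R-module, W = End_R(M), and α an anti-endomorphism of W. Then: (1) if M is finitely generated projective as a right R-module, or M^α is finitely generated projective as a right W-module, then b_α is right regular; (2) if M^α is projective as a right W-module and M is finitely generated as a right R-module, then b_α is right regular; (3) if M^α embeds in a free right W-module, then b_α is right injective; (4) if M^α embeds in a flat right W-module and M is finitely generated as a right R-module, then b_α is right injective. -/
open MulOpposite TensorProduct Function

universe u v w v'

section Core

/-- An anti-endomorphism of a ring: additive, unital, reverses multiplication. -/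
def IsAntiEndo {W : Type*} [Ring W] (α : W → W) : Prop :=
  (∀ u v : W, α (u + v) = α u + α v) ∧ α 1 = 1 ∧ ∀ u v : W, α (u * v) = α v * α u

/-- An anti-automorphism of a ring: a bijective anti-endomorphism. -/
def IsAntiAuto {W : Type*} [Ring W] (α : W → W) : Prop :=
  IsAntiEndo α ∧ Function.Bijective α

/-- An inner automorphism of a ring: conjugation by a unit. -/
def IsInnerAut {W : Type*} [Ring W] (φ : W → W) : Prop :=
  ∃ u : Wˣ, ∀ w : W, φ w = ↑u * w * ↑u⁻¹

variable (R : Type u) [Ring R]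

/-- A double `R`-module structure on the additive group `K`: two commuting
right `R`-module structures `m0` and `m1`. -/
structure DoubleModule (K : Type v) [AddCommGroup K] where
  m0 : K → R → K
  m1 : K → R → K
  m0_add_left : ∀ (k k' : K) (r : R), m0 (k + k') r = m0 k r + m0 k' r
  m0_add_right : ∀ (k : K) (r r' : R), m0 k (r + r') = m0 k r + m0 k r'
  m0_mul : ∀ (k : K) (r r' : R), m0 k (r * r') = m0 (m0 k r) r'
  m0_one : ∀ k : K, m0 k 1 = k
  m1_add_left : ∀ (k k' : K) (r : R), m1 (k + k') r = m1 k r + m1 k' r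
  m1_add_right : ∀ (k : K) (r r' : R), m1 k (r + r') = m1 k r + m1 k r'
  m1_mul : ∀ (k : K) (r r' : R), m1 k (r * r') = m1 (m1 k r) r'
  m1_one : ∀ k : K, m1 k 1 = k
  comm : ∀ (k : K) (a b : R), m1 (m0 k a) b = m0 (m1 k b) a

variable {R}

/-- A homomorphism of double `R`-modules. -/
def IsDoubleHom {K : Type v} {K' : Type w} [AddCommGroup K] [AddCommGroup K']
    (DK : DoubleModule R K) (DK' : DoubleModule R K') (f : K → K') : Prop :=
  (∀ k k' : K, f (k + k') = f k + f k') ∧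
  (∀ (k : K) (r : R), f (DK.m0 k r) = DK'.m0 (f k) r) ∧
  (∀ (k : K) (r : R), f (DK.m1 k r) = DK'.m1 (f k) r)

/-- An isomorphism of double `R`-modules. -/
def IsDoubleIso {K : Type v} {K' : Type w} [AddCommGroup K] [AddCommGroup K']
    (DK : DoubleModule R K) (DK' : DoubleModule R K') (f : K → K') : Prop :=
  IsDoubleHom DK DK' f ∧ Function.Bijective f

/-- An anti-automorphism of a double `R`-module: an additive bijection exchanging
the two module structures. -/
def IsDoubleAntiAuto {K : Type v} [AddCommGroup K] (DK : DoubleModule R K) (θ : K → K) : Prop :=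
  Function.Bijective θ ∧ (∀ k k' : K, θ (k + k') = θ k + θ k') ∧
  (∀ (k : K) (r : R), θ (DK.m0 k r) = DK.m1 (θ k) r) ∧
  (∀ (k : K) (r : R), θ (DK.m1 k r) = DK.m0 (θ k) r)

variable (R)

/-- A general bilinear form on a right `R`-module `M` (encoded as a module over `Rᵐᵒᵖ`)
with values in a double `R`-module `(K, DK)`. -/
structure GBF (M : Type v) [AddCommGroup M] [Module Rᵐᵒᵖ M]
    (K : Type w) [AddCommGroup K] (DK : DoubleModule R K) where
  b : M → M → K
  add_left : ∀ x x' y : M, b (x + x') y = b x y + b x' y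
  add_right : ∀ x y y' : M, b x (y + y') = b x y + b x y'
  smul_left : ∀ (x y : M) (r : R), b (op r • x) y = DK.m0 (b x y) r
  smul_right : ∀ (x y : M) (r : R), b x (op r • y) = DK.m1 (b x y) r

variable {R}

namespace GBF

variable {M : Type v} [AddCommGroup M] [Module Rᵐᵒᵖ M]
  {K : Type w} [AddCommGroup K] {DK : DoubleModule R K}

/-- The right adjoint of `β` is injective. -/
def RightInjective (β : GBF R M K DK) : Prop :=
  ∀ x x' : M, (∀ y : M, β.b y x = β.b y x') → x = x'

/-- The right adjoint of `β` is bijective onto `Hom_R(M, K₀)`. -/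
def RightRegular (β : GBF R M K DK) : Prop :=
  β.RightInjective ∧
  ∀ f : M → K, (∀ y y' : M, f (y + y') = f y + f y') →
    (∀ (y : M) (r : R), f (op r • y) = DK.m0 (f y) r) →
    ∃ x : M, ∀ y : M, f y = β.b y x

/-- The left adjoint of `β` is injective. -/
def LeftInjective (β : GBF R M K DK) : Prop :=
  ∀ x x' : M, (∀ y : M, β.b x y = β.b x' y) → x = x'

/-- The left adjoint of `β` is bijective onto `Hom_R(M, K₁)`. -/
def LeftRegular (β : GBF R M K DK) : Prop :=
  β.LeftInjective ∧
  ∀ f : M → K, (∀ y y' : M, f (y + y') = f y + f y') →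
    (∀ (y : M) (r : R), f (op r • y) = DK.m1 (f y) r) →
    ∃ x : M, ∀ y : M, f y = β.b x y

/-- `α` is an adjoint anti-endomorphism for `β`: `β(w x, y) = β(x, α(w) y)`. -/
def IsAdjoint (β : GBF R M K DK) (α : Module.End Rᵐᵒᵖ M → Module.End Rᵐᵒᵖ M) : Prop :=
  ∀ (w : Module.End Rᵐᵒᵖ M) (x y : M), β.b (w x) y = β.b x (α w y)

/-- Similarity of general bilinear forms on the same module. -/
def Similar {K' : Type v'} [AddCommGroup K'] {DK' : DoubleModule R K'}
    (β : GBF R M K DK) (β' : GBF R M K' DK') : Prop :=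
  ∃ f : K → K', IsDoubleIso DK DK' f ∧ ∀ x y : M, β'.b x y = f (β.b x y)

end GBF

section Kalpha

variable {M : Type v} [AddCommGroup M] [Module Rᵐᵒᵖ M]

/-- The subgroup of `M ⊗_ℤ M` generated by the elements `(w x) ⊗ y - x ⊗ (α w y)`. -/
def kalphaRel (α : Module.End Rᵐᵒᵖ M → Module.End Rᵐᵒᵖ M) : Submodule ℤ (M ⊗[ℤ] M) :=
  Submodule.span ℤ
    {z | ∃ (w : Module.End Rᵐᵒᵖ M) (x y : M), z = (w x) ⊗ₜ[ℤ] y - x ⊗ₜ[ℤ] (α w y)}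

/-- `K_α`, the quotient of `M ⊗_ℤ M` by the relations `(w x) ⊗ y = x ⊗ (α w y)`. -/
abbrev Kalpha (α : Module.End Rᵐᵒᵖ M → Module.End Rᵐᵒᵖ M) : Type _ :=
  (M ⊗[ℤ] M) ⧸ kalphaRel α

/-- The map `x ⊗ y ↦ (x·r) ⊗ y` on `M ⊗_ℤ M`. -/
noncomputable def smulLeftMap (r : R) : (M ⊗[ℤ] M) →ₗ[ℤ] (M ⊗[ℤ] M) :=
  TensorProduct.map ((DistribMulAction.toAddMonoidHom M (op r : Rᵐᵒᵖ)).toIntLinearMap)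
    LinearMap.id

/-- The map `x ⊗ y ↦ x ⊗ (y·r)` on `M ⊗_ℤ M`. -/
noncomputable def smulRightMap (r : R) : (M ⊗[ℤ] M) →ₗ[ℤ] (M ⊗[ℤ] M) :=
  TensorProduct.map LinearMap.id
    ((DistribMulAction.toAddMonoidHom M (op r : Rᵐᵒᵖ)).toIntLinearMap)

theorem smulLeftMap_tmul (r : R) (x y : M) :
    smulLeftMap (M := M) r (x ⊗ₜ[ℤ] y) = (op r • x) ⊗ₜ[ℤ] y := rfl

theorem smulRightMap_tmul (r : R) (x y : M) :
    smulRightMap (M := M) r (x ⊗ₜ[ℤ] y) = x ⊗ₜ[ℤ] (op r • y) := rfl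

theorem kalphaRel_le_left (α : Module.End Rᵐᵒᵖ M → Module.End Rᵐᵒᵖ M) (r : R) :
    kalphaRel α ≤ (kalphaRel α).comap (smulLeftMap (M := M) r) := by
  rw [kalphaRel, Submodule.span_le]
  rintro _ ⟨w, x, y, rfl⟩
  rw [SetLike.mem_coe, Submodule.mem_comap, map_sub]
  have h1 : smulLeftMap (M := M) r ((w x) ⊗ₜ[ℤ] y) = (w (op r • x)) ⊗ₜ[ℤ] y := by
    simp [smulLeftMap_tmul, map_smul]
  have h2 : smulLeftMap (M := M) r (x ⊗ₜ[ℤ] (α w y)) = (op r • x) ⊗ₜ[ℤ] (α w y) := by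
    simp [smulLeftMap_tmul]
  rw [h1, h2]
  exact Submodule.subset_span ⟨w, op r • x, y, rfl⟩

theorem kalphaRel_le_right (α : Module.End Rᵐᵒᵖ M → Module.End Rᵐᵒᵖ M) (r : R) :
    kalphaRel α ≤ (kalphaRel α).comap (smulRightMap (M := M) r) := by
  rw [kalphaRel, Submodule.span_le]
  rintro _ ⟨w, x, y, rfl⟩
  rw [SetLike.mem_coe, Submodule.mem_comap, map_sub]
  have h1 : smulRightMap (M := M) r ((w x) ⊗ₜ[ℤ] y) = (w x) ⊗ₜ[ℤ] (op r • y) := by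
    simp [smulRightMap_tmul]
  have h2 : smulRightMap (M := M) r (x ⊗ₜ[ℤ] (α w y)) = x ⊗ₜ[ℤ] (α w (op r • y)) := by
    simp [smulRightMap_tmul, map_smul]
  rw [h1, h2]
  exact Submodule.subset_span ⟨w, x, op r • y, rfl⟩

/-- The `m0`-action on `K_α`. -/
noncomputable def kSmul0 (α : Module.End Rᵐᵒᵖ M → Module.End Rᵐᵒᵖ M) (r : R) :
    Kalpha α →ₗ[ℤ] Kalpha α :=
  Submodule.mapQ _ _ (smulLeftMap r) (kalphaRel_le_left α r)

/-- The `m1`-action on `K_α`. -/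
noncomputable def kSmul1 (α : Module.End Rᵐᵒᵖ M → Module.End Rᵐᵒᵖ M) (r : R) :
    Kalpha α →ₗ[ℤ] Kalpha α :=
  Submodule.mapQ _ _ (smulRightMap r) (kalphaRel_le_right α r)

theorem kSmul0_mk (α : Module.End Rᵐᵒᵖ M → Module.End Rᵐᵒᵖ M) (r : R) (t : M ⊗[ℤ] M) :
    kSmul0 α r (Submodule.Quotient.mk t) = Submodule.Quotient.mk (smulLeftMap r t) := rfl

theorem kSmul1_mk (α : Module.End Rᵐᵒᵖ M → Module.End Rᵐᵒᵖ M) (r : R) (t : M ⊗[ℤ] M) :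
    kSmul1 α r (Submodule.Quotient.mk t) = Submodule.Quotient.mk (smulRightMap r t) := rfl

/-- The double `R`-module structure on `K_α`. -/
noncomputable def KalphaDM (α : Module.End Rᵐᵒᵖ M → Module.End Rᵐᵒᵖ M) :
    DoubleModule R (Kalpha α) where
  m0 k r := kSmul0 α r k
  m1 k r := kSmul1 α r k
  m0_add_left k k' r := map_add _ k k'
  m0_add_right := by
    intro k r r'
    induction k using Submodule.Quotient.induction_on with
    | _ t =>
      rw [kSmul0_mk, kSmul0_mk, kSmul0_mk, ← Submodule.Quotient.mk_add]
      congr 1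
      induction t with
      | zero => simp
      | tmul x y => simp [smulLeftMap_tmul, op_add, add_smul, TensorProduct.add_tmul]
      | add a b ha hb => rw [map_add, map_add, map_add, ha, hb]; abel
  m0_mul := by
    intro k r r'
    induction k using Submodule.Quotient.induction_on with
    | _ t =>
      rw [kSmul0_mk, kSmul0_mk, kSmul0_mk]
      congr 1
      induction t with
      | zero => simp
      | tmul x y => simp [smulLeftMap_tmul, op_mul, mul_smul]
      | add a b ha hb => rw [map_add, map_add, map_add, ha, hb]
  m0_one := by
    intro k
    induction k using Submodule.Quotient.induction_on with
    | _ t =>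
      rw [kSmul0_mk]
      congr 1
      induction t with
      | zero => simp
      | tmul x y => simp [smulLeftMap_tmul]
      | add a b ha hb => rw [map_add, ha, hb]
  m1_add_left k k' r := map_add _ k k'
  m1_add_right := by
    intro k r r'
    induction k using Submodule.Quotient.induction_on with
    | _ t =>
      rw [kSmul1_mk, kSmul1_mk, kSmul1_mk, ← Submodule.Quotient.mk_add]
      congr 1
      induction t with
      | zero => simp
      | tmul x y => simp [smulRightMap_tmul, op_add, add_smul, TensorProduct.tmul_add]
      | add a b ha hb => rw [map_add, map_add, map_add, ha, hb]; abel
  m1_mul := by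
    intro k r r'
    induction k using Submodule.Quotient.induction_on with
    | _ t =>
      rw [kSmul1_mk, kSmul1_mk, kSmul1_mk]
      congr 1
      induction t with
      | zero => simp
      | tmul x y => simp [smulRightMap_tmul, op_mul, mul_smul]
      | add a b ha hb => rw [map_add, map_add, map_add, ha, hb]
  m1_one := by
    intro k
    induction k using Submodule.Quotient.induction_on with
    | _ t =>
      rw [kSmul1_mk]
      congr 1
      induction t with
      | zero => simp
      | tmul x y => simp [smulRightMap_tmul]
      | add a b ha hb => rw [map_add, ha, hb]
  comm := by
    intro k a c
    induction k using Submodule.Quotient.induction_on with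
    | _ t =>
      rw [kSmul0_mk, kSmul1_mk, kSmul1_mk, kSmul0_mk]
      congr 1
      induction t with
      | zero => simp
      | tmul x y => simp [smulLeftMap_tmul, smulRightMap_tmul]
      | add p q hp hq => rw [map_add, map_add, map_add, map_add, hp, hq]

/-- The universal general bilinear form `b_α : M × M → K_α`. -/
noncomputable def balpha (α : Module.End Rᵐᵒᵖ M → Module.End Rᵐᵒᵖ M) :
    GBF R M (Kalpha α) (KalphaDM α) where
  b x y := Submodule.Quotient.mk (x ⊗ₜ[ℤ] y)
  add_left x x' y := by
    rw [TensorProduct.add_tmul, Submodule.Quotient.mk_add]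
  add_right x y y' := by
    rw [TensorProduct.tmul_add, Submodule.Quotient.mk_add]
  smul_left x y r := by
    show _ = kSmul0 α r (Submodule.Quotient.mk (x ⊗ₜ[ℤ] y))
    rw [kSmul0_mk]
    congr 1
  smul_right x y r := by
    show _ = kSmul1 α r (Submodule.Quotient.mk (x ⊗ₜ[ℤ] y))
    rw [kSmul1_mk]
    congr 1

end Kalpha

end Core

section BalTensor

/-- The subgroup of relations defining the balanced tensor product `A ⊗_S B` of a right
`S`-module `A` and a left `S`-module `B` over a (possibly noncommutative) ring `S`. -/
def balRel (S : Type u) [Ring S] (A : Type v) [AddCommGroup A] [Module Sᵐᵒᵖ A]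
    (B : Type w) [AddCommGroup B] [Module S B] : Submodule ℤ (A ⊗[ℤ] B) :=
  Submodule.span ℤ
    {z | ∃ (s : S) (a : A) (b : B), z = (op s • a) ⊗ₜ[ℤ] b - a ⊗ₜ[ℤ] (s • b)}

/-- The balanced tensor product `A ⊗_S B` over a possibly noncommutative ring `S`. -/
abbrev BalTensor (S : Type u) [Ring S] (A : Type v) [AddCommGroup A] [Module Sᵐᵒᵖ A]
    (B : Type w) [AddCommGroup B] [Module S B] : Type (max v w) :=
  (A ⊗[ℤ] B) ⧸ balRel S A B

/-- Functoriality of the balanced tensor product in both arguments. -/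
noncomputable def balMap {S : Type u} [Ring S] {A : Type v} {A' : Type v'}
    {B : Type w} {B' : Type w'}
    [AddCommGroup A] [AddCommGroup A'] [AddCommGroup B] [AddCommGroup B']
    [Module Sᵐᵒᵖ A] [Module Sᵐᵒᵖ A'] [Module S B] [Module S B']
    (f : A →ₗ[Sᵐᵒᵖ] A') (g : B →ₗ[S] B') :
    BalTensor S A B →ₗ[ℤ] BalTensor S A' B' :=
  Submodule.liftQ _ ((balRel S A' B').mkQ ∘ₗ
      TensorProduct.map (f.toAddMonoidHom.toIntLinearMap) (g.toAddMonoidHom.toIntLinearMap))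
    (by
      rw [balRel, Submodule.span_le]
      rintro _ ⟨s, a, b, rfl⟩
      erw [SetLike.mem_coe, LinearMap.mem_ker, LinearMap.comp_apply, map_sub,
        TensorProduct.map_tmul, TensorProduct.map_tmul]
      have h1 : f.toAddMonoidHom.toIntLinearMap (op s • a) = op s • f a := f.map_smul _ _
      have h2 : g.toAddMonoidHom.toIntLinearMap (s • b) = s • g b := g.map_smul _ _
      rw [h1, h2, map_sub, sub_eq_zero]
      have hmem : (op s • f a) ⊗ₜ[ℤ] (g.toAddMonoidHom.toIntLinearMap b) -
          (f.toAddMonoidHom.toIntLinearMap a) ⊗ₜ[ℤ] (s • g b) ∈ balRel S A' B' :=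
        Submodule.subset_span ⟨s, f a, g b, rfl⟩
      rw [← sub_eq_zero] at *
      rw [← map_sub]
      exact (Submodule.Quotient.mk_eq_zero _).mpr hmem)

theorem balMap_mk {S : Type u} [Ring S] {A : Type v} {A' : Type v'}
    {B : Type w} {B' : Type w'}
    [AddCommGroup A] [AddCommGroup A'] [AddCommGroup B] [AddCommGroup B']
    [Module Sᵐᵒᵖ A] [Module Sᵐᵒᵖ A'] [Module S B] [Module S B']
    (f : A →ₗ[Sᵐᵒᵖ] A') (g : B →ₗ[S] B') (a : A) (b : B) :
    balMap f g (Submodule.Quotient.mk (a ⊗ₜ[ℤ] b)) =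
      Submodule.Quotient.mk ((f a) ⊗ₜ[ℤ] (g b)) := rfl

/-- A left `S`-module `F` is flat if `— ⊗_S F` preserves injectivity of maps of right
`S`-modules. -/
def LeftFlat (S : Type u) [Ring S] (F : Type w) [AddCommGroup F] [Module S F] : Prop :=
  ∀ (A A' : Type u) (iA : AddCommGroup A) (iA' : AddCommGroup A')
    (mA : Module Sᵐᵒᵖ A) (mA' : Module Sᵐᵒᵖ A') (f : A →ₗ[Sᵐᵒᵖ] A'),
    Function.Injective f → Function.Injective (balMap f (LinearMap.id : F →ₗ[S] F))

/-- A right `S`-module `F` is flat if `F ⊗_S —` preserves injectivity of maps of left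
`S`-modules. -/
def RightFlat (S : Type u) [Ring S] (F : Type v) [AddCommGroup F] [Module Sᵐᵒᵖ F] : Prop :=
  ∀ (B B' : Type u) (iB : AddCommGroup B) (iB' : AddCommGroup B')
    (mB : Module S B) (mB' : Module S B') (g : B →ₗ[S] B'),
    Function.Injective g → Function.Injective (balMap (LinearMap.id : F →ₗ[Sᵐᵒᵖ] F) g)

end BalTensor

/-- The right `W`-module `M^α` (`W = End_R(M)`): the additive group `M` with the right
action `m · w := α(w) m`. -/
def malphaModule {R : Type u} [Ring R] {M : Type v} [AddCommGroup M] [Module Rᵐᵒᵖ M]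
    (α : Module.End Rᵐᵒᵖ M → Module.End Rᵐᵒᵖ M) (hα : IsAntiEndo α) :
    Module (Module.End Rᵐᵒᵖ M)ᵐᵒᵖ M where
  smul w m := α w.unop m
  one_smul m := by show α 1 m = m; rw [hα.2.1]; rfl
  mul_smul w w' m := by
    show α (w * w').unop m = α w.unop (α w'.unop m)
    rw [MulOpposite.unop_mul, hα.2.2]
    rfl
  smul_zero w := map_zero _
  smul_add w m m' := map_add _ m m'
  add_smul w w' m := by
    show α (w + w').unop m = α w.unop m + α w'.unop m
    rw [MulOpposite.unop_add, hα.1]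
    rfl
  zero_smul m := by
    show α 0 m = 0
    have h0 : α 0 = 0 := by
      have h := hα.1 0 0
      rw [add_zero] at h
      exact (left_eq_add.mp h)
    rw [h0]
    rfl


section Proof8

variable {R : Type u} [Ring R] {M : Type v} [AddCommGroup M] [Module Rᵐᵒᵖ M]

/-- Build a biadditive map. -/
def mkBi {A : Type*} [AddCommGroup A] (f : M → M → A)
    (h1 : ∀ x x' y, f (x + x') y = f x y + f x' y)
    (h2 : ∀ x y y', f x (y + y') = f x y + f x y') : M →+ M →+ A :=
  AddMonoidHom.mk' (fun x => AddMonoidHom.mk' (f x) (h2 x))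
    (fun x x' => AddMonoidHom.ext fun y => h1 x x' y)

@[simp] lemma mkBi_apply {A : Type*} [AddCommGroup A] (f : M → M → A)
    (h1) (h2) (x y : M) : mkBi f h1 h2 x y = f x y := rfl

/-- Lift a biadditive map compatible with the `K_α` relations to `K_α`. -/
noncomputable def kLift {A : Type*} [AddCommGroup A]
    (α : Module.End Rᵐᵒᵖ M → Module.End Rᵐᵒᵖ M) (B : M →+ M →+ A)
    (hB : ∀ (w : Module.End Rᵐᵒᵖ M) (x y : M), B (w x) y = B x (α w y)) :
    Kalpha (M := M) α →ₗ[ℤ] A :=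
  Submodule.liftQ _ (TensorProduct.liftAddHom B (fun r m n => by
      rw [map_zsmul, map_zsmul]; rfl)).toIntLinearMap
    (by
      rw [kalphaRel, Submodule.span_le]
      rintro _ ⟨w, x, y, rfl⟩
      simp only [SetLike.mem_coe, LinearMap.mem_ker, map_sub,
        AddMonoidHom.coe_toIntLinearMap, TensorProduct.liftAddHom_tmul, hB w x y, sub_self])

@[simp] lemma kLift_mk {A : Type*} [AddCommGroup A]
    (α : Module.End Rᵐᵒᵖ M → Module.End Rᵐᵒᵖ M) (B : M →+ M →+ A)
    (hB : ∀ (w : Module.End Rᵐᵒᵖ M) (x y : M), B (w x) y = B x (α w y)) (x y : M) :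
    kLift α B hB (Submodule.Quotient.mk (x ⊗ₜ[ℤ] y)) = B x y := by
  show kLift α B hB (Submodule.Quotient.mk (x ⊗ₜ[ℤ] y)) = _
  rw [kLift, Submodule.liftQ_apply]
  simp

/-- The defining relation of `K_α`. -/
lemma kRel (α : Module.End Rᵐᵒᵖ M → Module.End Rᵐᵒᵖ M) (w : Module.End Rᵐᵒᵖ M) (x y : M) :
    (Submodule.Quotient.mk ((w x) ⊗ₜ[ℤ] y) : Kalpha α) =
      Submodule.Quotient.mk (x ⊗ₜ[ℤ] (α w y)) :=
  (Submodule.Quotient.eq _).2 (Submodule.subset_span ⟨w, x, y, rfl⟩)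

lemma kalpha_induction (α : Module.End Rᵐᵒᵖ M → Module.End Rᵐᵒᵖ M)
    {P : Kalpha (M := M) α → Prop} (h0 : P 0)
    (htm : ∀ x y : M, P (Submodule.Quotient.mk (x ⊗ₜ[ℤ] y)))
    (hadd : ∀ a b, P a → P b → P (a + b)) : ∀ t, P t := by
  intro t
  induction t using Submodule.Quotient.induction_on with
  | _ u =>
    induction u with
    | zero => simpa using h0
    | tmul x y => exact htm x y
    | add a b ha hb => rw [Submodule.Quotient.mk_add]; exact hadd _ _ ha hb

lemma mk_sum (α : Module.End Rᵐᵒᵖ M → Module.End Rᵐᵒᵖ M) {β : Type*} (S : Finset β)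
    (g : β → M ⊗[ℤ] M) :
    (Submodule.Quotient.mk (∑ i ∈ S, g i) : Kalpha α) =
      ∑ i ∈ S, (Submodule.Quotient.mk (g i) : Kalpha α) :=
  map_sum ((kalphaRel α).mkQ) g S

lemma quot_mk_sum {N : Type*} [AddCommGroup N] (p : Submodule ℤ N) {β : Type*}
    (S : Finset β) (g : β → N) :
    (Submodule.Quotient.mk (∑ i ∈ S, g i) : N ⧸ p) =
      ∑ i ∈ S, (Submodule.Quotient.mk (g i) : N ⧸ p) := by
  rw [← Submodule.mkQ_apply, map_sum]
  simp [Submodule.mkQ_apply]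

end Proof8


section Parts

variable {R : Type u} [Ring R] {M : Type v} [AddCommGroup M] [Module Rᵐᵒᵖ M]

lemma part1a (α : Module.End Rᵐᵒᵖ M → Module.End Rᵐᵒᵖ M) (hα : IsAntiEndo α)
    (hfin : Module.Finite Rᵐᵒᵖ M) (hproj : Module.Projective Rᵐᵒᵖ M) :
    (balpha (M := M) α).RightRegular := by
  classical
  obtain ⟨n, gens, hspan⟩ := Module.Finite.exists_fin (R := Rᵐᵒᵖ) (M := M)
  have hsurj : Function.Surjective (Finsupp.linearCombination Rᵐᵒᵖ gens) := by
    rw [← LinearMap.range_eq_top, Finsupp.range_linearCombination, hspan]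
  obtain ⟨σ, hσ⟩ := Module.projective_lifting_property _ LinearMap.id hsurj
  have hσ' : ∀ m : M, Finsupp.linearCombination Rᵐᵒᵖ gens (σ m) = m := fun m => by
    have := LinearMap.ext_iff.1 hσ m
    simpa using this
  -- the endomorphisms e m i : y ↦ (σ y i) • m
  let e : M → Fin n → Module.End Rᵐᵒᵖ M := fun m i =>
    { toFun := fun y => (σ y i) • m
      map_add' := fun y y' => by
        show (σ (y + y')) i • m = (σ y) i • m + (σ y') i • m
        rw [map_add, Finsupp.add_apply, add_smul]
      map_smul' := fun c y => by
        show (σ (c • y)) i • m = c • ((σ y) i • m)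
        rw [map_smul, Finsupp.smul_apply, smul_eq_mul, mul_smul] }
  have he_apply : ∀ (m y : M) (i : Fin n), e m i y = (σ y i) • m := fun _ _ _ => rfl
  -- the retractions ρ i : K_α → M
  let ρ : Fin n → (Kalpha (M := M) α →ₗ[ℤ] M) := fun i =>
    kLift α (mkBi (fun m nn => α (e m i) nn)
      (fun m m' nn => by
        show α (e (m + m') i) nn = α (e m i) nn + α (e m' i) nn
        have h : e (m + m') i = e m i + e m' i := LinearMap.ext fun y => smul_add _ _ _
        rw [h, hα.1]; rfl)
      (fun m nn nn' => map_add _ _ _))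
      (fun w m nn => by
        simp only [mkBi_apply]
        have h : e (w m) i = w * e m i := LinearMap.ext fun y => by
          rw [Module.End.mul_apply, he_apply, he_apply, map_smul]
        rw [h, hα.2.2]; rfl)
  have hρ : ∀ (i : Fin n) (x y : M),
      ρ i (Submodule.Quotient.mk (x ⊗ₜ[ℤ] y)) = α (e x i) y := fun i x y => by
    show kLift _ _ _ _ = _
    rw [kLift_mk, mkBi_apply]
  -- sum of dual-basis endomorphisms is the identity
  have hsum1 : ∑ i, e (gens i) i = 1 := LinearMap.ext fun y => by
    rw [LinearMap.sum_apply, Module.End.one_apply]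
    have : ∑ i, e (gens i) i y = ∑ i, (σ y i) • gens i := by
      simp [he_apply]
    have h5 : (σ y).sum (fun i c => c • gens i) = ∑ i, (σ y) i • gens i :=
      Finsupp.sum_fintype _ _ (fun i => zero_smul _ _)
    rw [this, ← h5, ← Finsupp.linearCombination_apply, hσ']
  let αh : Module.End Rᵐᵒᵖ M →+ Module.End Rᵐᵒᵖ M := AddMonoidHom.mk' α hα.1
  have hαsum : ∑ i, α (e (gens i) i) = 1 := by
    have h1 : ∑ i, α (e (gens i) i) = αh (∑ i, e (gens i) i) := (map_sum αh _ _).symm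
    rw [h1, hsum1]
    exact hα.2.1
  constructor
  · -- right injectivity
    intro x x' hxx'
    have h1 : ∀ i : Fin n, α (e (gens i) i) x = α (e (gens i) i) x' := fun i => by
      have h2 := congrArg (ρ i) (hxx' (gens i))
      simpa only [balpha, hρ] using h2
    calc x = (∑ i, α (e (gens i) i)) x := by rw [hαsum]; exact (Module.End.one_apply x).symm
    _ = ∑ i, α (e (gens i) i) x := LinearMap.sum_apply _ _ _
    _ = ∑ i, α (e (gens i) i) x' := Finset.sum_congr rfl fun i _ => h1 i
    _ = (∑ i, α (e (gens i) i)) x' := (LinearMap.sum_apply _ _ _).symm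
    _ = x' := by rw [hαsum]; exact Module.End.one_apply x'
  · -- surjectivity onto right-linear maps
    intro f hfadd hfsm
    let fh : M →+ Kalpha (M := M) α := AddMonoidHom.mk' f hfadd
    have claim : ∀ (i : Fin n) (y : M) (t : Kalpha (M := M) α),
        (Submodule.Quotient.mk (y ⊗ₜ[ℤ] (ρ i t)) : Kalpha α) =
          kSmul0 α (σ y i).unop t := by
      intro i y
      refine kalpha_induction α ?_ ?_ ?_
      · rw [map_zero, map_zero, TensorProduct.tmul_zero]
        exact Submodule.Quotient.mk_zero _
      · intro m nn
        rw [hρ, ← kRel α (e m i) y nn, kSmul0_mk, smulLeftMap_tmul, he_apply,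
          MulOpposite.op_unop]
      · intro a b ha hb
        rw [map_add, map_add, TensorProduct.tmul_add, Submodule.Quotient.mk_add, ha, hb]
    refine ⟨∑ i, ρ i (f (gens i)), fun y => ?_⟩
    have hy : y = ∑ i, op ((σ y i).unop) • gens i := by
      simp only [MulOpposite.op_unop]
      conv_lhs => rw [← hσ' y]
      rw [Finsupp.linearCombination_apply]
      exact Finsupp.sum_fintype _ _ (fun i => zero_smul _ _)
    have h3 : f y = ∑ i, f (op ((σ y i).unop) • gens i) := by
      conv_lhs => rw [hy]
      exact map_sum fh _ _
    rw [h3]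
    have h4 : ∀ i : Fin n, f (op ((σ y i).unop) • gens i) =
        kSmul0 α ((σ y i).unop) (f (gens i)) := fun i => hfsm (gens i) _
    simp only [h4, ← claim]
    show _ = Submodule.Quotient.mk (y ⊗ₜ[ℤ] _)
    rw [TensorProduct.tmul_sum, mk_sum]

lemma core_regular (α : Module.End Rᵐᵒᵖ M → Module.End Rᵐᵒᵖ M) (hα : IsAntiEndo α)
    {ι : Type*} (s : M → (ι →₀ (Module.End Rᵐᵒᵖ M)ᵐᵒᵖ)) (p : ι → M)
    (hs_add : ∀ m m', s (m + m') = s m + s m')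
    (hs_tw : ∀ (w : Module.End Rᵐᵒᵖ M) (m : M) (i : ι), s (α w m) i = op w * s m i)
    (hrecon : ∀ m : M, ((s m).sum fun i c => α c.unop (p i)) = m)
    (hfin : Finite ι ∨ Module.Finite Rᵐᵒᵖ M) :
    (balpha (M := M) α).RightRegular := by
  classical
  -- the coefficient map Φ : K_α → (ι →₀ M)
  let ΦF : Kalpha (M := M) α →ₗ[ℤ] (ι →₀ M) :=
    kLift α (mkBi (fun m nn => (s nn).mapRange (fun c => c.unop m) (by simp))
      (fun m m' nn => by
        show Finsupp.mapRange _ _ _ = _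
        ext i
        simp [Finsupp.mapRange_apply, map_add])
      (fun m nn nn' => by
        show Finsupp.mapRange _ _ _ = _
        rw [hs_add]
        exact Finsupp.mapRange_add (fun c c' => by simp) _ _))
      (fun w m nn => by
        simp only [mkBi_apply]
        ext i
        rw [Finsupp.mapRange_apply, Finsupp.mapRange_apply, hs_tw,
          MulOpposite.unop_mul, MulOpposite.unop_op, Module.End.mul_apply])
  have hΦ : ∀ x y : M, ΦF (Submodule.Quotient.mk (x ⊗ₜ[ℤ] y)) =
      (s y).mapRange (fun c => c.unop x) (by simp) := fun x y => by
    show kLift _ _ _ _ = _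
    rw [kLift_mk, mkBi_apply]
  have hΦ' : ∀ (x y : M) (i : ι),
      ΦF (Submodule.Quotient.mk (x ⊗ₜ[ℤ] y)) i = (s y i).unop x := fun x y i => by
    rw [hΦ, Finsupp.mapRange_apply]
  -- reconstruction: t = Σ_i (Φ t) i ⊗ p i
  have hrec : ∀ t : Kalpha (M := M) α,
      ((ΦF t).sum fun i m' => (Submodule.Quotient.mk (m' ⊗ₜ[ℤ] p i) : Kalpha α)) = t := by
    refine kalpha_induction α ?_ ?_ ?_
    · rw [map_zero, Finsupp.sum_zero_index]
    · intro m nn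
      rw [hΦ, Finsupp.sum_mapRange_index (fun i => by
        rw [TensorProduct.zero_tmul]; exact Submodule.Quotient.mk_zero _)]
      have h1 : ((s nn).sum fun i c =>
          (Submodule.Quotient.mk ((c.unop m) ⊗ₜ[ℤ] p i) : Kalpha α)) =
          (s nn).sum fun i c =>
          (Submodule.Quotient.mk (m ⊗ₜ[ℤ] (α c.unop (p i))) : Kalpha α) :=
        Finsupp.sum_congr fun i _ => kRel α ((s nn) i).unop m (p i)
      rw [h1]
      let A : M →+ Kalpha (M := M) α := AddMonoidHom.mk' (fun z =>
        Submodule.Quotient.mk (m ⊗ₜ[ℤ] z)) (fun z z' => by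
          show (Submodule.Quotient.mk (m ⊗ₜ[ℤ] (z + z')) : Kalpha α) = _
          rw [TensorProduct.tmul_add]; exact Submodule.Quotient.mk_add _)
      have h2 : ((s nn).sum fun i c =>
          (Submodule.Quotient.mk (m ⊗ₜ[ℤ] (α c.unop (p i))) : Kalpha α)) =
          A ((s nn).sum fun i c => α c.unop (p i)) := (map_finsuppSum A _ _).symm
      rw [h2, hrecon]
      rfl
    · intro a b ha hb
      rw [map_add, Finsupp.sum_add_index' (fun i => by
          rw [TensorProduct.zero_tmul]; exact Submodule.Quotient.mk_zero _)
        (fun i z z' => by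
          rw [TensorProduct.add_tmul]; exact Submodule.Quotient.mk_add _), ha, hb]
  -- Φ intertwines the m0-action
  have hΦsm : ∀ (r : R) (i : ι) (t : Kalpha (M := M) α),
      ΦF (kSmul0 α r t) i = op r • (ΦF t i) := by
    intro r i
    refine kalpha_induction α ?_ ?_ ?_
    · rw [map_zero, map_zero]; simp
    · intro m nn
      rw [kSmul0_mk, smulLeftMap_tmul, hΦ', hΦ', map_smul]
    · intro a b ha hb
      rw [map_add, map_add, map_add, Finsupp.add_apply, Finsupp.add_apply, ha, hb,
        smul_add]
  constructor
  · -- right injectivity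
    intro x x' hxx'
    have h1 : ∀ i : ι, s x i = s x' i := fun i => by
      have h2 : ∀ y : M, (s x i).unop y = (s x' i).unop y := fun y => by
        have h3 := congrArg (fun t => ΦF t i) (hxx' y)
        simpa only [balpha, hΦ'] using h3
      exact MulOpposite.unop_injective (LinearMap.ext h2)
    have h4 : s x = s x' := Finsupp.ext h1
    rw [← hrecon x, ← hrecon x', h4]
  · -- surjectivity
    intro f hfadd hfsm
    -- the coefficient endomorphisms
    let Hi : ι → Module.End Rᵐᵒᵖ M := fun i =>
      { toFun := fun y => ΦF (f y) i
        map_add' := fun y y' => by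
          show ΦF (f (y + y')) i = _
          rw [hfadd, map_add, Finsupp.add_apply]
        map_smul' := fun c y => by
          show ΦF (f (c • y)) i = c • ΦF (f y) i
          have h1 : c • y = op c.unop • y := by rw [MulOpposite.op_unop]
          rw [h1, hfsm]
          have h2 : (KalphaDM (M := M) α).m0 (f y) c.unop = kSmul0 α c.unop (f y) := rfl
          rw [h2, hΦsm, MulOpposite.op_unop] }
    obtain ⟨S, hS⟩ : ∃ S : Finset ι, ∀ i ∉ S, Hi i = 0 := by
      rcases hfin with hι | hM
      · letI := Fintype.ofFinite ι
        exact ⟨Finset.univ, fun i hi => absurd (Finset.mem_univ i) hi⟩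
      · obtain ⟨n, gens, hspan⟩ := Module.Finite.exists_fin (R := Rᵐᵒᵖ) (M := M)
        refine ⟨Finset.univ.biUnion (fun j : Fin n => (ΦF (f (gens j))).support),
          fun i hi => ?_⟩
        have hZ : ∀ j : Fin n, Hi i (gens j) = 0 := fun j => by
          have : i ∉ (ΦF (f (gens j))).support := fun hmem =>
            hi (Finset.mem_biUnion.2 ⟨j, Finset.mem_univ _, hmem⟩)
          simpa [Hi] using Finsupp.notMem_support_iff.1 this
        have hall : ∀ y ∈ Submodule.span Rᵐᵒᵖ (Set.range gens), Hi i y = 0 := by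
          intro y hy
          refine Submodule.span_induction ?_ ?_ ?_ ?_ hy
          · rintro _ ⟨j, rfl⟩; exact hZ j
          · exact map_zero _
          · intro a b _ _ ha hb
            rw [map_add, ha, hb, add_zero]
          · intro c a _ ha
            rw [map_smul, ha, smul_zero]
        ext y
        rw [hall y (by rw [hspan]; trivial)]
        rfl
    refine ⟨∑ i ∈ S, α (Hi i) (p i), fun y => ?_⟩
    show f y = Submodule.Quotient.mk (y ⊗ₜ[ℤ] _)
    have hsupp : (ΦF (f y)).support ⊆ S := fun i hi => by
      by_contra hiS
      have h0 : Hi i y = 0 := by rw [hS i hiS]; rfl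
      exact (Finsupp.mem_support_iff.1 hi) h0
    calc f y = (ΦF (f y)).sum fun i m' =>
        (Submodule.Quotient.mk (m' ⊗ₜ[ℤ] p i) : Kalpha α) := (hrec (f y)).symm
    _ = ∑ i ∈ S, (Submodule.Quotient.mk ((ΦF (f y) i) ⊗ₜ[ℤ] p i) : Kalpha α) :=
        Finsupp.sum_of_support_subset _ hsupp _ (fun i _ => by
          rw [TensorProduct.zero_tmul]; exact Submodule.Quotient.mk_zero _)
    _ = ∑ i ∈ S, (Submodule.Quotient.mk (y ⊗ₜ[ℤ] (α (Hi i) (p i))) : Kalpha α) :=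
        Finset.sum_congr rfl (fun i _ => by
          have h5 : ΦF (f y) i = Hi i y := rfl
          rw [h5, kRel α (Hi i) y (p i)])
    _ = Submodule.Quotient.mk (y ⊗ₜ[ℤ] ∑ i ∈ S, α (Hi i) (p i)) := by
        rw [TensorProduct.tmul_sum, mk_sum]

lemma part1b (α : Module.End Rᵐᵒᵖ M → Module.End Rᵐᵒᵖ M) (hα : IsAntiEndo α)
    (hfp : letI := malphaModule α hα
      Module.Finite (Module.End Rᵐᵒᵖ M)ᵐᵒᵖ M ∧
        Module.Projective (Module.End Rᵐᵒᵖ M)ᵐᵒᵖ M) :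
    (balpha (M := M) α).RightRegular := by
  letI := malphaModule α hα
  obtain ⟨hfin, hproj⟩ := hfp
  haveI := hfin
  haveI := hproj
  obtain ⟨n, gens, hspan⟩ :=
    Module.Finite.exists_fin (R := (Module.End Rᵐᵒᵖ M)ᵐᵒᵖ) (M := M)
  have hsurj : Function.Surjective
      (Finsupp.linearCombination (Module.End Rᵐᵒᵖ M)ᵐᵒᵖ gens) := by
    rw [← LinearMap.range_eq_top, Finsupp.range_linearCombination, hspan]
  obtain ⟨σ, hσ⟩ := Module.projective_lifting_property _ LinearMap.id hsurj
  have hσ' : ∀ m : M,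
      Finsupp.linearCombination (Module.End Rᵐᵒᵖ M)ᵐᵒᵖ gens (σ m) = m := fun m => by
    have := LinearMap.ext_iff.1 hσ m
    simpa using this
  refine core_regular α hα (fun m => σ m) gens (fun m m' => map_add σ m m') ?_ ?_
    (Or.inl inferInstance)
  · intro w m i
    have h1 : α w m = (op w) • m := rfl
    show (σ (α w m)) i = op w * (σ m) i
    rw [h1, map_smul, Finsupp.smul_apply, smul_eq_mul]
  · intro m
    have h2 := hσ' m
    rw [Finsupp.linearCombination_apply] at h2
    exact h2

lemma part2 (α : Module.End Rᵐᵒᵖ M → Module.End Rᵐᵒᵖ M) (hα : IsAntiEndo α)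
    (hproj : letI := malphaModule α hα
      Module.Projective (Module.End Rᵐᵒᵖ M)ᵐᵒᵖ M)
    (hfin : Module.Finite Rᵐᵒᵖ M) :
    (balpha (M := M) α).RightRegular := by
  letI := malphaModule α hα
  obtain ⟨σ, hσ⟩ := hproj.out
  refine core_regular α hα (fun m => σ m) id (fun m m' => map_add σ m m') ?_ ?_
    (Or.inr hfin)
  · intro w m i
    have h1 : α w m = (op w) • m := rfl
    show (σ (α w m)) i = op w * (σ m) i
    rw [h1, map_smul, Finsupp.smul_apply, smul_eq_mul]
  · intro m
    have h2 := hσ m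
    rw [Finsupp.linearCombination_apply] at h2
    exact h2

lemma part3 (α : Module.End Rᵐᵒᵖ M → Module.End Rᵐᵒᵖ M)
    (h : ∃ (ι : Type v) (g : M → (ι →₀ Module.End Rᵐᵒᵖ M)), Function.Injective g ∧
        (∀ m m' : M, g (m + m') = g m + g m') ∧
        (∀ (w : Module.End Rᵐᵒᵖ M) (m : M) (i : ι), g (α w m) i = g m i * w)) :
    (balpha (M := M) α).RightInjective := by
  obtain ⟨ι, g, hginj, hgadd, hgW⟩ := h
  intro x x' hxx'
  have key : ∀ i : ι, g x i = g x' i := by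
    intro i
    let Φ : Kalpha (M := M) α →ₗ[ℤ] M :=
      kLift α (mkBi (fun a b => (g b i) a)
        (fun a a' b => map_add _ _ _)
        (fun a b b' => by
          show (g (b + b') i) a = (g b i) a + (g b' i) a
          rw [hgadd]; rfl))
        (fun w a b => by
          show (g b i) (w a) = (g (α w b) i) a
          rw [hgW, Module.End.mul_apply])
    have hΦ : ∀ a b : M, Φ (Submodule.Quotient.mk (a ⊗ₜ[ℤ] b)) = (g b i) a :=
      fun a b => by
        show kLift _ _ _ _ = _
        rw [kLift_mk, mkBi_apply]
    refine LinearMap.ext fun y => ?_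
    have h3 := congrArg Φ (hxx' y)
    simpa only [balpha, hΦ] using h3
  exact hginj (Finsupp.ext key)

lemma part4 (α : Module.End Rᵐᵒᵖ M → Module.End Rᵐᵒᵖ M) (hα : IsAntiEndo α)
    (h : ∃ (F : Type (max u v)) (iF : AddCommGroup F)
        (mF : Module (Module.End Rᵐᵒᵖ M)ᵐᵒᵖ F),
        RightFlat (Module.End Rᵐᵒᵖ M) F ∧
        ∃ g : M → F, Function.Injective g ∧ (∀ m m' : M, g (m + m') = g m + g m') ∧
          ∀ (w : Module.End Rᵐᵒᵖ M) (m : M), g (α w m) = MulOpposite.op w • g m)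
    (hfin : Module.Finite Rᵐᵒᵖ M) :
    (balpha (M := M) α).RightInjective := by
  classical
  obtain ⟨F, iF, mF, hFlat, g, hginj, hgadd, hgtw⟩ := h
  intro x x' hxx'
  obtain ⟨k, gens, hspan⟩ := Module.Finite.exists_fin (R := Rᵐᵒᵖ) (M := M)
  -- the map Λ : K_α → F ⊗_W M
  let Λ : Kalpha (M := M) α →ₗ[ℤ] BalTensor (Module.End Rᵐᵒᵖ M) F M :=
    kLift α (mkBi (fun a b => Submodule.Quotient.mk ((g b) ⊗ₜ[ℤ] a))
      (fun a a' b => by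
        show (Submodule.Quotient.mk ((g b) ⊗ₜ[ℤ] (a + a')) : _) = _
        rw [TensorProduct.tmul_add]
        exact Submodule.Quotient.mk_add _)
      (fun a b b' => by
        show (Submodule.Quotient.mk ((g (b + b')) ⊗ₜ[ℤ] a) : _) = _
        rw [hgadd, TensorProduct.add_tmul]
        exact Submodule.Quotient.mk_add _))
      (fun w a b => by
        show (Submodule.Quotient.mk ((g b) ⊗ₜ[ℤ] (w a)) : _) =
          Submodule.Quotient.mk ((g (α w b)) ⊗ₜ[ℤ] a)
        rw [hgtw]
        have hmem : ((op w • g b) ⊗ₜ[ℤ] a) - (g b) ⊗ₜ[ℤ] (w • a) ∈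
            balRel (Module.End Rᵐᵒᵖ M) F M :=
          Submodule.subset_span ⟨w, g b, a, rfl⟩
        exact ((Submodule.Quotient.eq _).2 hmem).symm)
  have hΛ : ∀ a b : M, Λ (Submodule.Quotient.mk (a ⊗ₜ[ℤ] b)) =
      Submodule.Quotient.mk ((g b) ⊗ₜ[ℤ] a) := fun a b => by
    show kLift _ _ _ _ = _
    rw [kLift_mk, mkBi_apply]
  set c : F := g x - g x' with hc
  have hc0 : ∀ y : M,
      (Submodule.Quotient.mk (c ⊗ₜ[ℤ] y) :
        BalTensor (Module.End Rᵐᵒᵖ M) F M) = 0 := by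
    intro y
    have h3 := congrArg Λ (hxx' y)
    simp only [balpha, hΛ] at h3
    rw [hc, TensorProduct.sub_tmul, Submodule.Quotient.mk_sub, h3, sub_self]
  -- the evaluation map W → M^k
  let ev : Module.End Rᵐᵒᵖ M →ₗ[Module.End Rᵐᵒᵖ M] (Fin k → M) :=
    { toFun := fun w => fun j => w (gens j)
      map_add' := fun w w' => by funext j; rfl
      map_smul' := fun cc w => by
        funext j
        show (cc * w) (gens j) = (cc • fun j => w (gens j)) j
        rw [Module.End.mul_apply]
        rfl }
  have evinj : Function.Injective ev := by
    intro w w' hww'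
    have hall : ∀ y ∈ Submodule.span Rᵐᵒᵖ (Set.range gens), w y = w' y := by
      intro y hy
      refine Submodule.span_induction ?_ ?_ ?_ ?_ hy
      · rintro _ ⟨j, rfl⟩
        exact congrFun hww' j
      · rw [map_zero, map_zero]
      · intro a b _ _ ha hb
        rw [map_add, map_add, ha, hb]
      · intro r a _ ha
        rw [map_smul, map_smul, ha]
    exact LinearMap.ext fun y => hall y (by rw [hspan]; trivial)
  have hinj2 := hFlat _ _ _ _ _ _ ev evinj
  -- image of c ⊗ 1 under balMap id ev vanishes
  have hgens : (Submodule.Quotient.mk (c ⊗ₜ[ℤ] gens) :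
      BalTensor (Module.End Rᵐᵒᵖ M) F (Fin k → M)) = 0 := by
    have hsplit : (c ⊗ₜ[ℤ] gens : F ⊗[ℤ] (Fin k → M)) =
        ∑ j, c ⊗ₜ[ℤ] Pi.single j (gens j) := by
      conv_lhs => rw [← Finset.univ_sum_single gens]
      rw [TensorProduct.tmul_sum]
    rw [hsplit, quot_mk_sum]
    refine Finset.sum_eq_zero fun j _ => ?_
    have h4 := balMap_mk (S := Module.End Rᵐᵒᵖ M)
      (LinearMap.id : F →ₗ[(Module.End Rᵐᵒᵖ M)ᵐᵒᵖ] F)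
      (LinearMap.single (Module.End Rᵐᵒᵖ M) (fun _ : Fin k => M) j) c (gens j)
    have h5 : (Submodule.Quotient.mk (c ⊗ₜ[ℤ] Pi.single j (gens j)) :
        BalTensor (Module.End Rᵐᵒᵖ M) F (Fin k → M)) =
        balMap (LinearMap.id : F →ₗ[(Module.End Rᵐᵒᵖ M)ᵐᵒᵖ] F)
          (LinearMap.single (Module.End Rᵐᵒᵖ M) (fun _ : Fin k => M) j)
          (Submodule.Quotient.mk (c ⊗ₜ[ℤ] gens j)) := h4.symm
    rw [h5, hc0 (gens j), map_zero]
  have him : balMap (LinearMap.id : F →ₗ[(Module.End Rᵐᵒᵖ M)ᵐᵒᵖ] F) ev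
      (Submodule.Quotient.mk (c ⊗ₜ[ℤ] (1 : Module.End Rᵐᵒᵖ M))) = 0 := by
    rw [balMap_mk]
    have hev1 : ev (1 : Module.End Rᵐᵒᵖ M) = gens := by
      funext j
      show (1 : Module.End Rᵐᵒᵖ M) (gens j) = gens j
      rw [Module.End.one_apply]
    rw [hev1]
    exact hgens
  have hker : (Submodule.Quotient.mk (c ⊗ₜ[ℤ] (1 : Module.End Rᵐᵒᵖ M)) :
      BalTensor (Module.End Rᵐᵒᵖ M) F (Module.End Rᵐᵒᵖ M)) = 0 := by
    apply hinj2
    rw [him, map_zero]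
  -- collapse F ⊗_W W → F
  let B2 : F →+ (Module.End Rᵐᵒᵖ M) →+ F :=
    AddMonoidHom.mk' (fun a => AddMonoidHom.mk' (fun w => MulOpposite.op w • a)
        (fun w w' => by
          show op (w + w') • a = op w • a + op w' • a
          rw [MulOpposite.op_add, add_smul]))
      (fun a a' => AddMonoidHom.ext fun w => by
        show op w • (a + a') = op w • a + op w • a'
        exact smul_add _ _ _)
  have hB2c : ∀ (r : ℤ) (a : F) (w : Module.End Rᵐᵒᵖ M),
      (B2 (r • a)) w = (B2 a) (r • w) := fun r a w => by
    rw [map_zsmul, map_zsmul]; rfl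
  have hker2 : balRel (Module.End Rᵐᵒᵖ M) F (Module.End Rᵐᵒᵖ M) ≤
      LinearMap.ker (TensorProduct.liftAddHom B2 hB2c).toIntLinearMap := by
    rw [balRel, Submodule.span_le]
    rintro _ ⟨sW, a, b, rfl⟩
    simp only [SetLike.mem_coe, LinearMap.mem_ker, map_sub,
      AddMonoidHom.coe_toIntLinearMap, TensorProduct.liftAddHom_tmul]
    show op b • (op sW • a) - op (sW • b) • a = 0
    rw [smul_eq_mul, MulOpposite.op_mul, mul_smul, sub_self]
  have hcz : c = 0 := by
    calc c = op (1 : Module.End Rᵐᵒᵖ M) • c := by rw [MulOpposite.op_one, one_smul]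
    _ = (TensorProduct.liftAddHom B2 hB2c).toIntLinearMap
        (c ⊗ₜ[ℤ] (1 : Module.End Rᵐᵒᵖ M)) := by
      rw [AddMonoidHom.coe_toIntLinearMap, TensorProduct.liftAddHom_tmul]
      rfl
    _ = Submodule.liftQ _ (TensorProduct.liftAddHom B2 hB2c).toIntLinearMap hker2
        (Submodule.Quotient.mk (c ⊗ₜ[ℤ] (1 : Module.End Rᵐᵒᵖ M))) :=
      (Submodule.liftQ_apply _ _ _).symm
    _ = 0 := by rw [hker, map_zero]
  have : g x = g x' := by
    have h5 := sub_eq_zero.1 (hc ▸ hcz)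
    exact h5
  exact hginj this

end Parts

/-- Sufficient conditions for `b_α` to be right regular / right injective,
in terms of `M` as a right `R`-module and `M^α` as a right `W`-module. -/
theorem stmt_8 {R : Type u} [Ring R] {M : Type v} [AddCommGroup M] [Module Rᵐᵒᵖ M]
    (α : Module.End Rᵐᵒᵖ M → Module.End Rᵐᵒᵖ M) (hα : IsAntiEndo α) :
    -- (1)
    ((Module.Finite Rᵐᵒᵖ M ∧ Module.Projective Rᵐᵒᵖ M) ∨
      (letI := malphaModule α hα
       Module.Finite (Module.End Rᵐᵒᵖ M)ᵐᵒᵖ M ∧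
         Module.Projective (Module.End Rᵐᵒᵖ M)ᵐᵒᵖ M) →
      (balpha (M := M) α).RightRegular) ∧
    -- (2)
    ((letI := malphaModule α hα
      Module.Projective (Module.End Rᵐᵒᵖ M)ᵐᵒᵖ M) → Module.Finite Rᵐᵒᵖ M →
      (balpha (M := M) α).RightRegular) ∧
    -- (3) `M^α` embeds in a free right `W`-module
    ((∃ (ι : Type v) (g : M → (ι →₀ Module.End Rᵐᵒᵖ M)), Function.Injective g ∧
        (∀ m m' : M, g (m + m') = g m + g m') ∧
        (∀ (w : Module.End Rᵐᵒᵖ M) (m : M) (i : ι), g (α w m) i = g m i * w)) →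
      (balpha (M := M) α).RightInjective) ∧
    -- (4) `M^α` embeds in a flat right `W`-module and `M` is f.g.
    ((∃ (F : Type (max u v)) (iF : AddCommGroup F)
        (mF : Module (Module.End Rᵐᵒᵖ M)ᵐᵒᵖ F),
        RightFlat (Module.End Rᵐᵒᵖ M) F ∧
        ∃ g : M → F, Function.Injective g ∧ (∀ m m' : M, g (m + m') = g m + g m') ∧
          ∀ (w : Module.End Rᵐᵒᵖ M) (m : M), g (α w m) = MulOpposite.op w • g m) →
      Module.Finite Rᵐᵒᵖ M → (balpha (M := M) α).RightInjective) := by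
  refine ⟨?_, ?_, ?_, ?_⟩
  · rintro (⟨hfin, hproj⟩ | h2)
    · exact part1a α hα hfin hproj
    · exact part1b α hα h2
  · intro hproj hfin
    exact part2 α hα hproj hfin
  · intro h
    exact part3 α h
  · intro h hfin
    exact part4 α hα h hfin
end

section
/- Let R be a ring and M a right R-module which is a generator. Let b : M × M → K be a right regular general bilinear form with corresponding anti-endomorphism α = α(b). If b_α is right regular, then b is similar to b_α. -/
open MulOpposite TensorProduct Function

universe u v w v'

/-- `M` is a generator of `Mod-R`: `R_R` is a direct summand of `Mⁿ` for some `n ∈ ℕ`. -/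
def IsGenerator (R : Type u) [Ring R] (M : Type v) [AddCommGroup M] [Module Rᵐᵒᵖ M] : Prop :=
  ∃ (n : ℕ) (i : R →ₗ[Rᵐᵒᵖ] (Fin n → M)) (p : (Fin n → M) →ₗ[Rᵐᵒᵖ] R), ∀ r : R, p (i r) = r

/-- If `M` is a generator, `b` is a right regular general bilinear form on `M`
with corresponding anti-endomorphism `α`, and `b_α` is right regular, then `b ∼ b_α`. -/
theorem stmt_10 {R : Type u} [Ring R] {M : Type v} [AddCommGroup M] [Module Rᵐᵒᵖ M]
    (hgen : IsGenerator R M)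
    {K : Type w} [AddCommGroup K] {DK : DoubleModule R K} (β : GBF R M K DK)
    (hreg : β.RightRegular)
    (α : Module.End Rᵐᵒᵖ M → Module.End Rᵐᵒᵖ M) (hadj : β.IsAdjoint α)
    (hba : (balpha (M := M) α).RightRegular) :
    (balpha (M := M) α).Similar β := by
  classical
  obtain ⟨n, i, p, hpi⟩ := hgen
  -- basic zero lemmas
  have bz : ∀ x : M, β.b x 0 = 0 := by
    intro x
    have h := β.add_right x 0 0
    rw [add_zero] at h
    exact (left_eq_add.mp h)
  have m0z : ∀ r : R, DK.m0 0 r = 0 := by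
    intro r
    have h := DK.m0_add_left 0 0 r
    rw [add_zero] at h
    exact (left_eq_add.mp h)
  have m1z : ∀ r : R, DK.m1 0 r = 0 := by
    intro r
    have h := DK.m1_add_left 0 0 r
    rw [add_zero] at h
    exact (left_eq_add.mp h)
  -- the descended map f : K_α → K
  let B0 : M →+ M →+ K :=
    AddMonoidHom.mk' (fun x => AddMonoidHom.mk' (β.b x) (β.add_right x))
      (fun x x' => AddMonoidHom.ext fun y => β.add_left x x' y)
  let B : M →ₗ[ℤ] M →ₗ[ℤ] K :=
    { toFun := fun x => (B0 x).toIntLinearMap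
      map_add' := fun x x' => by ext y; exact β.add_left x x' y
      map_smul' := fun c x => by
        ext y
        simp only [AddMonoidHom.coe_toIntLinearMap, RingHom.id_apply, LinearMap.smul_apply,
          AddMonoidHom.coe_toIntLinearMap]
        rw [map_zsmul B0 c x]
        rfl }
  let F0 : (M ⊗[ℤ] M) →ₗ[ℤ] K := TensorProduct.lift B
  have hF0 : ∀ x y : M, F0 (x ⊗ₜ[ℤ] y) = β.b x y := fun x y => rfl
  have hker : kalphaRel (M := M) α ≤ LinearMap.ker F0 := by
    rw [kalphaRel, Submodule.span_le]
    rintro _ ⟨w, x, y, rfl⟩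
    simp only [SetLike.mem_coe, LinearMap.mem_ker, map_sub, hF0]
    rw [hadj w x y, sub_self]
  let f : Kalpha (M := M) α →ₗ[ℤ] K := (kalphaRel (M := M) α).liftQ F0 hker
  have hfmk : ∀ x y : M, f (Submodule.Quotient.mk (x ⊗ₜ[ℤ] y)) = β.b x y := fun x y => rfl
  have hfb : ∀ x y : M, f ((balpha (M := M) α).b x y) = β.b x y := fun x y => rfl
  -- f commutes with m0
  have hm0 : ∀ (k : Kalpha (M := M) α) (r : R),
      f ((KalphaDM (M := M) α).m0 k r) = DK.m0 (f k) r := by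
    intro k r
    induction k using Submodule.Quotient.induction_on with
    | _ t =>
      show f (kSmul0 α r (Submodule.Quotient.mk t)) = _
      rw [kSmul0_mk]
      induction t with
      | zero =>
        rw [map_zero]
        simp only [Submodule.Quotient.mk_zero, map_zero, m0z]
      | tmul x y =>
        have h1 : smulLeftMap (M := M) r (x ⊗ₜ[ℤ] y) = (op r • x) ⊗ₜ[ℤ] y := by
          simp [smulLeftMap_tmul]
        rw [h1, hfmk, hfmk]
        exact β.smul_left x y r
      | add a c ha hc =>
        rw [map_add, Submodule.Quotient.mk_add, map_add, ha, hc,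
          Submodule.Quotient.mk_add, map_add, DK.m0_add_left]
  -- f commutes with m1
  have hm1 : ∀ (k : Kalpha (M := M) α) (r : R),
      f ((KalphaDM (M := M) α).m1 k r) = DK.m1 (f k) r := by
    intro k r
    induction k using Submodule.Quotient.induction_on with
    | _ t =>
      show f (kSmul1 α r (Submodule.Quotient.mk t)) = _
      rw [kSmul1_mk]
      induction t with
      | zero =>
        rw [map_zero]
        simp only [Submodule.Quotient.mk_zero, map_zero, m1z]
      | tmul x y =>
        have h1 : smulRightMap (M := M) r (x ⊗ₜ[ℤ] y) = x ⊗ₜ[ℤ] (op r • y) := by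
          simp [smulRightMap_tmul]
        rw [h1, hfmk, hfmk]
        exact β.smul_right x y r
      | add a c ha hc =>
        rw [map_add, Submodule.Quotient.mk_add, map_add, ha, hc,
          Submodule.Quotient.mk_add, map_add, DK.m1_add_left]
  -- injectivity of f
  have hinj : Function.Injective f := by
    rw [injective_iff_map_eq_zero]
    intro k hk
    have key : ∀ (j : Fin n) (y : M),
        (KalphaDM (M := M) α).m0 k (p (Pi.single j y)) = 0 := by
      intro j
      have gadd : ∀ y y' : M,
          (KalphaDM (M := M) α).m0 k (p (Pi.single j (y + y'))) =
          (KalphaDM (M := M) α).m0 k (p (Pi.single j y)) +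
            (KalphaDM (M := M) α).m0 k (p (Pi.single j y')) := by
        intro y y'
        rw [Pi.single_add, map_add, (KalphaDM (M := M) α).m0_add_right]
      have gsmul : ∀ (y : M) (r : R),
          (KalphaDM (M := M) α).m0 k (p (Pi.single j (op r • y))) =
          (KalphaDM (M := M) α).m0 ((KalphaDM (M := M) α).m0 k (p (Pi.single j y))) r := by
        intro y r
        rw [Pi.single_smul, map_smul, op_smul_eq_mul, (KalphaDM (M := M) α).m0_mul]
      obtain ⟨x, hx⟩ := hba.2 (fun m => (KalphaDM (M := M) α).m0 k (p (Pi.single j m)))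
        gadd gsmul
      have hx0 : x = 0 := by
        apply hreg.1
        intro y
        have h1 := congrArg f (hx y)
        rw [hfb, hm0, hk, m0z] at h1
        rw [← h1, bz]
      intro y
      rw [hx y, hx0]
      show Submodule.Quotient.mk (y ⊗ₜ[ℤ] (0 : M)) = 0
      rw [TensorProduct.tmul_zero, Submodule.Quotient.mk_zero]
    let gk : R →+ Kalpha (M := M) α :=
      AddMonoidHom.mk' (fun r => (KalphaDM (M := M) α).m0 k r)
        (fun a b => (KalphaDM (M := M) α).m0_add_right k a b)
    have : k = gk (p (i 1)) := by
      rw [hpi]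
      exact ((KalphaDM (M := M) α).m0_one k).symm
    rw [this, ← Finset.univ_sum_single (i 1), map_sum, map_sum]
    refine Finset.sum_eq_zero fun j _ => key j _
  -- surjectivity of f
  have hsurj : Function.Surjective f := by
    intro k'
    have comp : ∀ j : Fin n, ∃ x : M, ∀ y : M,
        DK.m0 k' (p (Pi.single j y)) = β.b y x := by
      intro j
      refine hreg.2 (fun m => DK.m0 k' (p (Pi.single j m))) ?_ ?_
      · intro y y'
        show DK.m0 k' (p (Pi.single j (y + y'))) = _
        rw [Pi.single_add, map_add, DK.m0_add_right]
      · intro y r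
        show DK.m0 k' (p (Pi.single j (op r • y))) = DK.m0 (DK.m0 k' (p (Pi.single j y))) r
        rw [Pi.single_smul, map_smul, op_smul_eq_mul, DK.m0_mul]
    choose x hx using comp
    refine ⟨Submodule.Quotient.mk (∑ j, (i 1 j) ⊗ₜ[ℤ] x j), ?_⟩
    have hmk : (Submodule.Quotient.mk (∑ j, (i 1 j) ⊗ₜ[ℤ] x j) : Kalpha (M := M) α) =
        ∑ j, Submodule.Quotient.mk ((i 1 j) ⊗ₜ[ℤ] x j) := by
      exact map_sum ((kalphaRel (M := M) α).mkQ) _ _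
    rw [hmk, map_sum]
    have : ∀ j : Fin n, f (Submodule.Quotient.mk ((i 1 j) ⊗ₜ[ℤ] x j)) =
        DK.m0 k' (p (Pi.single j (i 1 j))) := by
      intro j
      rw [hfmk, ← hx j (i 1 j)]
    rw [Finset.sum_congr rfl fun j _ => this j]
    let gk : R →+ K := AddMonoidHom.mk' (fun r => DK.m0 k' r)
      (fun a b => DK.m0_add_right k' a b)
    have h2 : ∑ j, DK.m0 k' (p (Pi.single j (i 1 j))) = gk (∑ j, p (Pi.single j (i 1 j))) := by
      rw [map_sum]
      rfl
    rw [h2, ← map_sum p, Finset.univ_sum_single (i 1), hpi]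
    exact DK.m0_one k'
  exact ⟨f, ⟨⟨fun k k' => map_add f k k', hm0, hm1⟩, hinj, hsurj⟩,
    fun x y => (hfb x y).symm⟩
end
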